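/- Let 0 < β < α < 1 with α² + β² = 1. Upon a failed outcome of the filter, the resulting assemblage is unsteerable: the normalized components σ'_{a|x} = K^(1) σ^(α)_{a|x} K^(1)† / Tr[K^(1) ρ_B K^(1)†] (with ρ_B = α²|0⟩⟨0| + β²|1⟩⟨1|) satisfy σ'_{0|0} = |0⟩⟨0|, σ'_{1|0} = 0, σ'_{0|1} = σ'_{1|1} = ½|0⟩⟨0|; in particular {σ'_{a|x}} admits a local-hidden-state model σ'_{a|x} = Σ_λ P_Λ(λ) P(a|x,λ) ρ_λ with a single value of λ and ρ_λ = |0⟩⟨0|. -/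

import Mathlib

open Matrix Finset
open scoped ComplexOrder

/-- Positive-semidefinite square root of a matrix (defined as `0` if the matrix
is not positive semidefinite). -/
noncomputable def matSqrt {d : ℕ} (A : Matrix (Fin d) (Fin d) ℂ) :
    Matrix (Fin d) (Fin d) ℂ :=
  open Classical in
  if h : A.PosSemidef then
    (h.1.eigenvectorUnitary : Matrix (Fin d) (Fin d) ℂ) *
      diagonal ((↑) ∘ (√·) ∘ h.1.eigenvalues) *
      (star h.1.eigenvectorUnitary : Matrix (Fin d) (Fin d) ℂ)
  else 0

/-- Fidelity between positive semidefinite matrices: `F(A,B) = Tr[√(√A · B · √A)]`. -/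
noncomputable def mFid {d : ℕ} (A B : Matrix (Fin d) (Fin d) ℂ) : ℝ :=
  (matSqrt (matSqrt A * B * matSqrt A)).trace.re

/-- The standard basis vector `|0⟩` of `ℂ²`. -/
def e0 : Fin 2 → ℂ := ![1, 0]

/-- The standard basis vector `|1⟩` of `ℂ²`. -/
def e1 : Fin 2 → ℂ := ![0, 1]

/-- The projector `|0⟩⟨0|`. -/
def P00 : Matrix (Fin 2) (Fin 2) ℂ := vecMulVec e0 (star e0)

/-- The projector `|1⟩⟨1|`. -/
def P11 : Matrix (Fin 2) (Fin 2) ℂ := vecMulVec e1 (star e1)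

/-- The Kraus operator `K⁰ = (β/α)|0⟩⟨0| + |1⟩⟨1|` of the successful filter outcome. -/
noncomputable def K0 (α β : ℝ) : Matrix (Fin 2) (Fin 2) ℂ :=
  ((β / α : ℝ) : ℂ) • P00 + P11

/-- The Kraus operator `K¹ = (√(α²−β²)/α)|0⟩⟨0|` of the failed filter outcome. -/
noncomputable def K1 (α β : ℝ) : Matrix (Fin 2) (Fin 2) ℂ :=
  ((Real.sqrt (α ^ 2 - β ^ 2) / α : ℝ) : ℂ) • P00

/-- Bob's reduced state `ρ_B = α²|0⟩⟨0| + β²|1⟩⟨1|` of the assemblage `Σ^(α)`. -/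
noncomputable def ρB (α β : ℝ) : Matrix (Fin 2) (Fin 2) ℂ :=
  ((α ^ 2 : ℝ) : ℂ) • P00 + ((β ^ 2 : ℝ) : ℂ) • P11

/-- The vector `|α₊⟩ = α|0⟩ + β|1⟩`. -/
def ketαp (α β : ℝ) : Fin 2 → ℂ := ![(α : ℂ), (β : ℂ)]

/-- The vector `|α₋⟩ = α|0⟩ − β|1⟩`. -/
def ketαm (α β : ℝ) : Fin 2 → ℂ := ![(α : ℂ), -(β : ℂ)]

/-- The vector `|+⟩ = (|0⟩+|1⟩)/√2`. -/
noncomputable def ketp : Fin 2 → ℂ :=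
  ![(1 / Real.sqrt 2 : ℝ), (1 / Real.sqrt 2 : ℝ)]

/-- The vector `|−⟩ = (|0⟩−|1⟩)/√2`. -/
noncomputable def ketm : Fin 2 → ℂ :=
  ![(1 / Real.sqrt 2 : ℝ), (-(1 / Real.sqrt 2) : ℝ)]

/-- The assemblage `Σ^(α)` with components `σ^(α)_{a|x}` (first index `a`, second `x`):
`σ^(α)_{0|0} = α²|0⟩⟨0|`, `σ^(α)_{1|0} = β²|1⟩⟨1|`,
`σ^(α)_{0|1} = ½|α₊⟩⟨α₊|`, `σ^(α)_{1|1} = ½|α₋⟩⟨α₋|`. -/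
noncomputable def σα (α β : ℝ) (a x : Fin 2) : Matrix (Fin 2) (Fin 2) ℂ :=
  if x = 0 then
    if a = 0 then ((α ^ 2 : ℝ) : ℂ) • P00 else ((β ^ 2 : ℝ) : ℂ) • P11
  else
    if a = 0 then (1 / 2 : ℂ) • vecMulVec (ketαp α β) (star (ketαp α β))
    else (1 / 2 : ℂ) • vecMulVec (ketαm α β) (star (ketαm α β))

/-- The singlet assemblage `Σ^{Φ⁺}` with components
`σ^{Φ⁺}_{0|0} = ½|0⟩⟨0|`, `σ^{Φ⁺}_{1|0} = ½|1⟩⟨1|`,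
`σ^{Φ⁺}_{0|1} = ½|+⟩⟨+|`, `σ^{Φ⁺}_{1|1} = ½|−⟩⟨−|`. -/
noncomputable def σΦ (a x : Fin 2) : Matrix (Fin 2) (Fin 2) ℂ :=
  if x = 0 then
    if a = 0 then (1 / 2 : ℂ) • P00 else (1 / 2 : ℂ) • P11
  else
    if a = 0 then (1 / 2 : ℂ) • vecMulVec ketp (star ketp)
    else (1 / 2 : ℂ) • vecMulVec ketm (star ketm)

/-- The assemblage obtained after a failed filter outcome:
`σ'_{a|x} = K¹ σ^(α)_{a|x} K¹† / Tr[K¹ ρ_B K¹†]`. -/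
noncomputable def σfail (α β : ℝ) (a x : Fin 2) : Matrix (Fin 2) (Fin 2) ℂ :=
  ((K1 α β * ρB α β * (K1 α β)ᴴ).trace)⁻¹ • (K1 α β * σα α β a x * (K1 α β)ᴴ)

/-- Upon a failed filter outcome, the resulting assemblage has
components `σ'_{0|0} = |0⟩⟨0|`, `σ'_{1|0} = 0`, `σ'_{0|1} = σ'_{1|1} = ½|0⟩⟨0|`;
in particular it admits a local-hidden-state model with a single hidden value `λ`
and hidden state `ρ_λ = |0⟩⟨0|`. -/
theorem failed_filter_unsteerable (α β : ℝ) (hβ : 0 < β) (hβα : β < α) (hα : α < 1)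
    (hnorm : α ^ 2 + β ^ 2 = 1) :
    σfail α β 0 0 = P00 ∧ σfail α β 1 0 = 0 ∧
      σfail α β 0 1 = (1 / 2 : ℂ) • P00 ∧ σfail α β 1 1 = (1 / 2 : ℂ) • P00 ∧
      ∃ P : Fin 2 → Fin 2 → ℝ, (∀ a x, 0 ≤ P a x) ∧ (∀ x, ∑ a, P a x = 1) ∧
        ∀ a x, σfail α β a x = ((P a x : ℝ) : ℂ) • P00 := by
  set c : ℂ := ((Real.sqrt (α ^ 2 - β ^ 2) / α : ℝ) : ℂ) with hc
  have hsand : ∀ M : Matrix (Fin 2) (Fin 2) ℂ,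
      K1 α β * M * (K1 α β)ᴴ = (c ^ 2 * M 0 0) • P00 := by
    intro M
    ext i j
    fin_cases i <;> fin_cases j <;>
      (simp [K1, P00, e0, vecMulVec, Matrix.mul_apply, Fin.sum_univ_two,
        conjTranspose_apply, Matrix.smul_apply, hc]; try ring)
  have hα0 : (0:ℝ) < α := hβ.trans hβα
  have hd : α ^ 2 - β ^ 2 > 0 := by nlinarith
  have hcne : c ≠ 0 := by
    simp only [hc, ne_eq, Complex.ofReal_eq_zero, div_eq_zero_iff, not_or]
    exact ⟨Real.sqrt_ne_zero'.mpr hd, hα0.ne'⟩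
  have hP00tr : (P00).trace = 1 := by
    simp [P00, Matrix.trace, Fin.sum_univ_two, vecMulVec, e0]
  have htr : (K1 α β * ρB α β * (K1 α β)ᴴ).trace = c ^ 2 * (α ^ 2 : ℝ) := by
    rw [hsand, trace_smul, hP00tr]
    simp [ρB, P00, P11, vecMulVec, e0, e1]
  have hαc : ((α:ℂ)^2) ≠ 0 := by
    exact_mod_cast pow_ne_zero 2 (by exact_mod_cast hα0.ne' : (α:ℂ) ≠ 0)
  have key : ∀ a x, σfail α β a x = ((σα α β a x 0 0) / ((α:ℂ)^2)) • P00 := by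
    intro a x
    rw [σfail, htr, hsand, smul_smul]
    congr 1
    push_cast
    field_simp
  have e00 : σα α β 0 0 0 0 = (α:ℂ)^2 := by simp [σα, P00, vecMulVec, e0]
  have e10 : σα α β 1 0 0 0 = 0 := by simp [σα, P11, vecMulVec, e1]
  have e01 : σα α β 0 1 0 0 = (α:ℂ)^2 / 2 := by
    simp [σα, vecMulVec, ketαp]; ring
  have e11 : σα α β 1 1 0 0 = (α:ℂ)^2 / 2 := by
    simp [σα, vecMulVec, ketαm]; ring
  have h1 : σfail α β 0 0 = P00 := by rw [key, e00]; field_simp; exact one_smul _ _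
  have h2 : σfail α β 1 0 = 0 := by rw [key, e10]; simp
  have h3 : σfail α β 0 1 = (1/2 : ℂ) • P00 := by
    rw [key, e01]; congr 1; field_simp
  have h4 : σfail α β 1 1 = (1/2 : ℂ) • P00 := by
    rw [key, e11]; congr 1; field_simp
  refine ⟨h1, h2, h3, h4, ![![1, 1/2], ![0, 1/2]], ?_, ?_, ?_⟩
  · intro a x; fin_cases a <;> fin_cases x <;> norm_num
  · intro x; fin_cases x <;> simp [Fin.sum_univ_two] <;> norm_num
  · intro a x; fin_cases a <;> fin_cases x <;>
      simp [h1, h2, h3, h4]
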